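/- Let x ≥ 2 components be partitioned so that exactly one component has size greater than w/2, and let the remaining r = x − 1 components (all of size ≤ w/2) have total size s ≤ w/2. Then ∑ over the small components of log(w/|C|) ≥ r·log(2r) ≥ (x/2)·log x. -/
import Mathlib


/-- With `x ≥ 2` components of total size `w`, exactly one of size `> w/2`, the remaining
`r = x - 1` small components (total size `s ≤ w/2`) satisfy
`∑_{small C} log (w/|C|) ≥ r log (2r) ≥ (x/2) log x`. -/
theorem stmt_2 (x w : ℕ) (hx : 2 ≤ x) (c : Fin x → ℕ) (hpos : ∀ i, 1 ≤ c i)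
    (hsum : ∑ i, c i = w) (i₀ : Fin x)
    (hbig : (w : ℝ) / 2 < (c i₀ : ℝ))
    (hsmall : ∀ i, i ≠ i₀ → (c i : ℝ) ≤ (w : ℝ) / 2)
    (hstot : (∑ i ∈ Finset.univ.erase i₀, (c i : ℝ)) ≤ (w : ℝ) / 2) :
    ((x : ℝ) - 1) * Real.log (2 * ((x : ℝ) - 1)) ≤
        ∑ i ∈ Finset.univ.erase i₀, Real.log ((w : ℝ) / (c i : ℝ)) ∧
    ((x : ℝ) / 2) * Real.log x ≤ ((x : ℝ) - 1) * Real.log (2 * ((x : ℝ) - 1)) := by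
  set T := Finset.univ.erase i₀ with hT
  have hcardT : T.card = x - 1 := by
    simp [hT, Finset.card_erase_of_mem]
  have hxR : (2 : ℝ) ≤ (x : ℝ) := by exact_mod_cast hx
  have hrR : (T.card : ℝ) = (x : ℝ) - 1 := by
    rw [hcardT]
    have : (1:ℕ) ≤ x := by omega
    push_cast [Nat.cast_sub this]
    ring
  have hr1 : (1 : ℝ) ≤ (x : ℝ) - 1 := by linarith
  have hrpos : (0 : ℝ) < (x : ℝ) - 1 := by linarith
  set r : ℝ := (x : ℝ) - 1 with hrdef
  set s : ℝ := ∑ i ∈ T, (c i : ℝ) with hsdef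
  have hcpos : ∀ i, (0 : ℝ) < (c i : ℝ) := fun i => by
    exact_mod_cast hpos i
  have hsr : r ≤ s := by
    rw [hsdef, ← hrR]
    calc (T.card : ℝ) = ∑ i ∈ T, (1:ℝ) := by simp
    _ ≤ ∑ i ∈ T, (c i : ℝ) := Finset.sum_le_sum fun i _ => by exact_mod_cast hpos i
  have hspos : (0 : ℝ) < s := lt_of_lt_of_le hrpos hsr
  have hwpos : (0 : ℝ) < (w : ℝ) := by linarith [hcpos i₀]
  -- Jensen
  have hjensen : ∑ i ∈ T, (1/r) * Real.log (c i) ≤ Real.log (∑ i ∈ T, (1/r) * (c i : ℝ)) := by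
    have hconc : ConcaveOn ℝ (Set.Ioi 0) Real.log :=
      strictConcaveOn_log_Ioi.concaveOn
    have h₁ : ∑ _i ∈ T, (1/r) = 1 := by
      rw [Finset.sum_const, nsmul_eq_mul, hrR]
      field_simp
    have := hconc.le_map_sum (t := T) (w := fun _ => 1/r) (p := fun i => (c i : ℝ))
      (fun i _ => by positivity) h₁ (fun i _ => hcpos i)
    simpa using this
  have hsumlog : ∑ i ∈ T, Real.log (c i) ≤ r * Real.log (s / r) := by
    have h2 : ∑ i ∈ T, (1/r) * (c i : ℝ) = s / r := by
      rw [← Finset.mul_sum, hsdef]; ring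
    have h3 : ∑ i ∈ T, (1/r) * Real.log (c i) = (1/r) * ∑ i ∈ T, Real.log (c i) := by
      rw [Finset.mul_sum]
    rw [h2, h3] at hjensen
    calc ∑ i ∈ T, Real.log (c i) = r * ((1/r) * ∑ i ∈ T, Real.log (c i)) := by
          field_simp
      _ ≤ r * Real.log (s / r) := by
          exact mul_le_mul_of_nonneg_left hjensen (le_of_lt hrpos)
  constructor
  · have hsplit : ∑ i ∈ T, Real.log ((w : ℝ) / (c i : ℝ))
        = r * Real.log w - ∑ i ∈ T, Real.log (c i) := by
      have h1 : ∑ i ∈ T, Real.log ((w : ℝ) / (c i : ℝ))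
          = ∑ i ∈ T, (Real.log w - Real.log (c i)) :=
        Finset.sum_congr rfl fun i _ =>
          Real.log_div (ne_of_gt hwpos) (ne_of_gt (hcpos i))
      rw [h1, Finset.sum_sub_distrib, Finset.sum_const, nsmul_eq_mul, hrR]
    rw [hsplit]
    have key : r * Real.log (2 * r) ≤ r * Real.log w - r * Real.log (s / r) := by
      rw [← mul_sub, ← Real.log_div (ne_of_gt hwpos) (by positivity)]
      apply mul_le_mul_of_nonneg_left _ (le_of_lt hrpos)
      apply Real.log_le_log (by positivity)
      rw [div_div_eq_mul_div, le_div_iff₀ hspos]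
      calc 2 * r * s ≤ 2 * r * ((w:ℝ)/2) := by
            apply mul_le_mul_of_nonneg_left hstot (by positivity)
        _ = (w:ℝ) * r := by ring
    calc r * Real.log (2 * r) ≤ r * Real.log w - r * Real.log (s / r) := key
      _ ≤ r * Real.log w - ∑ i ∈ T, Real.log (c i) := sub_le_sub_left hsumlog _
  · calc ((x : ℝ) / 2) * Real.log x ≤ r * Real.log x := by
          apply mul_le_mul_of_nonneg_right _ (Real.log_nonneg (by linarith))
          rw [hrdef]; linarith
      _ ≤ r * Real.log (2 * r) := by
          apply mul_le_mul_of_nonneg_left _ (le_of_lt hrpos)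
          apply Real.log_le_log (by linarith)
          rw [hrdef]; linarith
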